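/- In the complete bipartite graph K_{m,n} with 2 ≤ m < n, neither orbit (bipartition side) induces a connected subgraph, yet both orbits are terminal. Hence the converse of the statement 'a proper connected union of orbits implies a terminal orbit' fails. -/

import Mathlib

open SimpleGraph


/-- The orbit of a vertex under the automorphism group of `G`. -/
def GraphOrbit {V : Type*} (G : SimpleGraph V) (v : V) : Set V :=
  {u | ∃ φ : G ≃g G, φ v = u}

/-- `O` is an orbit of `Aut(G)` on vertices. -/
def IsOrbit {V : Type*} (G : SimpleGraph V) (O : Set V) : Prop :=
  ∃ v, O = GraphOrbit G v

/-- `O` is a terminal orbit-candidate set: for every `u ∉ O` and `v ∈ O` there is a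
`u`–`v` path meeting `O` only in `v`. -/
def IsTerminalSet {V : Type*} (G : SimpleGraph V) (O : Set V) : Prop :=
  ∀ u ∉ O, ∀ v ∈ O, ∃ p : G.Walk u v, p.IsPath ∧ {x | x ∈ p.support} ∩ O = {v}

/-- `G` is vertex-transitive. -/
def IsVertexTransitive {V : Type*} (G : SimpleGraph V) : Prop :=
  ∀ u v : V, ∃ φ : G ≃g G, φ u = v


lemma no_edge_not_reachable {V : Type*} {H : SimpleGraph V} (h : ∀ x y, ¬ H.Adj x y)
    {u v : V} (huv : u ≠ v) : ¬ H.Reachable u v := by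
  rintro ⟨w⟩
  cases w with
  | nil => exact huv rfl
  | cons ha _ => exact h _ _ ha

theorem stmt7 (m n : ℕ) (hm : 2 ≤ m) (hmn : m < n) :
    let G := completeBipartiteGraph (Fin m) (Fin n)
    let A : Set (Fin m ⊕ Fin n) := Set.range Sum.inl
    let B : Set (Fin m ⊕ Fin n) := Set.range Sum.inr
    ¬ (G.induce A).Connected ∧ ¬ (G.induce B).Connected ∧
      IsTerminalSet G A ∧ IsTerminalSet G B := by
  intro G A B
  have hn : 2 ≤ n := le_trans hm hmn.le
  refine ⟨?_, ?_, ?_, ?_⟩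
  · intro h
    have h0 : (⟨Sum.inl ⟨0, by omega⟩, ⟨_, rfl⟩⟩ : A) ≠ ⟨Sum.inl ⟨1, by omega⟩, ⟨_, rfl⟩⟩ := by
      intro h0; have := congrArg Subtype.val h0; simp [Fin.ext_iff] at this
    refine no_edge_not_reachable ?_ h0 (h.preconnected _ _)
    rintro ⟨x, a, rfl⟩ ⟨y, b, rfl⟩ hxy
    simp [G, completeBipartiteGraph] at hxy
  · intro h
    have h0 : (⟨Sum.inr ⟨0, by omega⟩, ⟨_, rfl⟩⟩ : B) ≠ ⟨Sum.inr ⟨1, by omega⟩, ⟨_, rfl⟩⟩ := by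
      intro h0; have := congrArg Subtype.val h0; simp [Fin.ext_iff] at this
    refine no_edge_not_reachable ?_ h0 (h.preconnected _ _)
    rintro ⟨x, a, rfl⟩ ⟨y, b, rfl⟩ hxy
    simp [G, completeBipartiteGraph] at hxy
  · rintro u hu v ⟨a, rfl⟩
    obtain (c | b) := u
    · exact absurd ⟨c, rfl⟩ hu
    · have hadj : G.Adj (Sum.inr b) (Sum.inl a) := by simp [G, completeBipartiteGraph]
      refine ⟨Walk.cons hadj Walk.nil, ?_, ?_⟩
      · simp
      · ext x
        simp only [SimpleGraph.Walk.support_cons, SimpleGraph.Walk.support_nil,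
          Set.mem_inter_iff, Set.mem_setOf_eq, List.mem_cons, List.mem_singleton,
          Set.mem_singleton_iff, List.not_mem_nil, or_false]
        constructor
        · rintro ⟨h1 | h1, h2⟩
          · exact absurd (h1 ▸ h2) hu
          · exact h1
        · rintro rfl; exact ⟨Or.inr rfl, a, rfl⟩
  · rintro u hu v ⟨b, rfl⟩
    obtain (a | c) := u
    · have hadj : G.Adj (Sum.inl a) (Sum.inr b) := by simp [G, completeBipartiteGraph]
      refine ⟨Walk.cons hadj Walk.nil, ?_, ?_⟩
      · simp
      · ext x
        simp only [SimpleGraph.Walk.support_cons, SimpleGraph.Walk.support_nil,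
          Set.mem_inter_iff, Set.mem_setOf_eq, List.mem_cons, List.mem_singleton,
          Set.mem_singleton_iff, List.not_mem_nil, or_false]
        constructor
        · rintro ⟨h1 | h1, h2⟩
          · exact absurd (h1 ▸ h2) hu
          · exact h1
        · rintro rfl; exact ⟨Or.inr rfl, b, rfl⟩
    · exact absurd ⟨c, rfl⟩ hu
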